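/- The map A ↦ d_A is a reverse lattice embedding of the Medvedev lattice into the strong Weihrauch lattice: for all A, B ⊆ 2^ω, d_B ≤_sW d_A if and only if A is Medvedev reducible to B; moreover d_{A ⊔ B} ≡_sW d_A ⊞ d_B (so Medvedev meets go to strong Weihrauch joins) and d_{A × B} ≡_sW d_A ⊓ d_B (so Medvedev joins go to strong Weihrauch meets). -/

import Mathlib

attribute [local instance] Classical.propDecidable

namespace StrongWeihrauch

noncomputable section

/-! ### Cantor space, monotone approximations, and the evaluation map -/

/-- Cantor space `2^ω`; we identify subsets of `ω` with their characteristic functions. -/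
abbrev Cantor : Type := ℕ → Bool

/-- The coded triple `⟨n,s,i⟩`. -/
def tpl (n s i : ℕ) : ℕ := Nat.pair n (Nat.pair s i)

/-- A monotone approximation (Definition 3.1): every element has the form `⟨n,s,i⟩` with
`i < 2`; for each `n` there is at most one pair `(s,i)` with `⟨n,s,i⟩ ∈ a`; and the stages `s`
are strictly increasing in `n`. -/
def MonotoneApprox (a : Cantor) : Prop :=
  (∀ k, a k = true → ∃ n s i, i < 2 ∧ k = tpl n s i) ∧
  (∀ n s t i j, a (tpl n s i) = true → a (tpl n t j) = true → s = t ∧ i = j) ∧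
  (∀ m n s t i j, a (tpl m s i) = true → a (tpl n t j) = true → m < n → s < t)

/-- A total monotone approximation: every `n` gets a value. -/
def TotalMonotoneApprox (a : Cantor) : Prop :=
  MonotoneApprox a ∧ ∀ n, ∃ s i, i < 2 ∧ a (tpl n s i) = true

/-- The value of the evaluation map `e` on a (total) monotone approximation:
`eVal a n = i` iff `⟨n,s,i⟩ ∈ a` for some `s`. -/
def eVal (a : Cantor) : Cantor := fun n => decide (∃ s, a (tpl n s 1) = true)

/-- The evaluation map `e : ⊆ 2^ω → 2^ω`, the partial function whose domain is the set of
total monotone approximations `a`, with `e(a)(n) = i` iff `⟨n,s,i⟩ ∈ a` for some `s`. -/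
def evalMA : Cantor →. Cantor := fun a => ⟨TotalMonotoneApprox a, fun _ => eVal a⟩

/-! ### Turing functionals -/

/-- The oracle information available at stage `s`: the first `s` bits of `p`. -/
def initSeg (p : Cantor) (s : ℕ) : List Bool := (List.range s).map p

/-- A `{0,1}`-valued Turing functional on Cantor space, presented by a computable monotone
finite-prefix approximation: `approx σ n = some b` means that the computation on input `n`
with oracle prefix `σ` has converged, with output `b`. -/
structure TuringFunctional where
  approx : List Bool → ℕ → Option Bool
  computable : Computable₂ approx
  mono : ∀ σ τ n b, σ <+: τ → approx σ n = some b → approx τ n = some b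

namespace TuringFunctional

/-- `Φ^p(n)[s]↓`. -/
def ConvAt (Φ : TuringFunctional) (p : Cantor) (n s : ℕ) : Prop :=
  (Φ.approx (initSeg p s) n).isSome = true

/-- `s` is least such that `Φ^p(n)[s]↓`. -/
def LeastStage (Φ : TuringFunctional) (p : Cantor) (n s : ℕ) : Prop :=
  Φ.ConvAt p n s ∧ ∀ t, t < s → ¬ Φ.ConvAt p n t

/-- Convention 2.1: if `Φ^p(n)[s]↓` then `Φ^p(m)[s]↓` for all `m < n`, and for each `s`
there is at most one `n` for which `s` is least with `Φ^p(n)[s]↓`. -/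
def Convention (Φ : TuringFunctional) : Prop :=
  (∀ (p : Cantor) (s n m : ℕ), m < n → Φ.ConvAt p n s → Φ.ConvAt p m s) ∧
  (∀ (p : Cantor) (s n n' : ℕ), Φ.LeastStage p n s → Φ.LeastStage p n' s → n = n')

/-- The partial function `⊆ 2^ω → 2^ω` computed by `Φ`; it is defined at `p` exactly when
`Φ(p)` is total, in which case its value is the map `n ↦ Φ^p(n)`. -/
def eval (Φ : TuringFunctional) : Cantor →. Cantor :=
  fun p => ⟨∀ n, ∃ s b, Φ.approx (initSeg p s) n = some b,
    fun h n => (h n).choose_spec.choose⟩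

end TuringFunctional

/-- `a_{Φ(p)}`: the set of all `⟨n,s,i⟩` where `s` is least such that `Φ^p(n)[s]↓ = i`. -/
def approxSeq (Φ : TuringFunctional) (p : Cantor) : Cantor := fun k =>
  decide (∃ n s b, k = tpl n s (Bool.toNat b) ∧ Φ.LeastStage p n s ∧
    Φ.approx (initSeg p s) n = some b)

/-- Turing reducibility `q ≤_T p` on Cantor space. -/
def TuringLe (q p : Cantor) : Prop := ∃ Φ : TuringFunctional, Φ.eval p = Part.some q

/-! ### Pairing on Cantor space -/

/-- The effective join `⟨p,q⟩` on Cantor space. -/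
def pairC (p q : Cantor) : Cantor := fun n => if n % 2 = 0 then p (n / 2) else q (n / 2)

def leftC (r : Cantor) : Cantor := fun n => r (2 * n)

def rightC (r : Cantor) : Cantor := fun n => r (2 * n + 1)

/-- The singleton `{i} ⊆ ω` as an element of Cantor space. -/
def natSet (i : ℕ) : Cantor := fun n => decide (n = i)

/-- `⟨i,p⟩`, i.e. `⟨{i},p⟩`. -/
def inC (i : ℕ) (p : Cantor) : Cantor := pairC (natSet i) p

lemma leftC_pairC (p q : Cantor) : leftC (pairC p q) = p := by
  funext n
  have h1 : 2 * n % 2 = 0 := by omega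
  have h2 : 2 * n / 2 = n := by omega
  simp [leftC, pairC, h1, h2]

lemma rightC_pairC (p q : Cantor) : rightC (pairC p q) = q := by
  funext n
  have h1 : (2 * n + 1) % 2 = 1 := by omega
  have h2 : (2 * n + 1) / 2 = n := by omega
  simp [rightC, pairC, h1, h2]

lemma tpl_inj {n s i n' s' i' : ℕ} (h : tpl n s i = tpl n' s' i') :
    n = n' ∧ s = s' ∧ i = i' := by
  unfold tpl at h
  rw [Nat.pair_eq_pair] at h
  rcases h with ⟨h1, h2⟩
  rw [Nat.pair_eq_pair] at h2
  exact ⟨h1, h2.1, h2.2⟩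

lemma toNat_lt_two (b : Bool) : b.toNat < 2 := by cases b <;> decide

/-- Encoding of `q ∈ 2^ω` as a total monotone approximation evaluating to `q`. -/
def maEncode (q : Cantor) : Cantor := fun k => decide (∃ n, k = tpl n n (q n).toNat)

lemma maEncode_mem {q : Cantor} {k : ℕ} :
    maEncode q k = true ↔ ∃ n, k = tpl n n (q n).toNat := by
  simp [maEncode]

lemma maEncode_total (q : Cantor) : TotalMonotoneApprox (maEncode q) := by
  refine ⟨⟨?_, ?_, ?_⟩, ?_⟩
  · intro k hk
    obtain ⟨n, rfl⟩ := maEncode_mem.mp hk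
    exact ⟨n, n, (q n).toNat, toNat_lt_two _, rfl⟩
  · intro n s t i j h1 h2
    obtain ⟨m, hm⟩ := maEncode_mem.mp h1
    obtain ⟨m', hm'⟩ := maEncode_mem.mp h2
    obtain ⟨e1, e2, e3⟩ := tpl_inj hm
    obtain ⟨f1, f2, f3⟩ := tpl_inj hm'
    have hmm' : m = m' := by omega
    refine ⟨by omega, by rw [e3, f3, hmm']⟩
  · intro m n s t i j h1 h2 hmn
    obtain ⟨u, hu⟩ := maEncode_mem.mp h1
    obtain ⟨v, hv⟩ := maEncode_mem.mp h2
    obtain ⟨e1, e2, _⟩ := tpl_inj hu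
    obtain ⟨f1, f2, _⟩ := tpl_inj hv
    omega
  · intro n
    exact ⟨n, (q n).toNat, toNat_lt_two _, maEncode_mem.mpr ⟨n, rfl⟩⟩

lemma eVal_maEncode (q : Cantor) : eVal (maEncode q) = q := by
  funext n
  have hiff : (∃ s, maEncode q (tpl n s 1) = true) ↔ q n = true := by
    constructor
    · rintro ⟨s, hs⟩
      obtain ⟨m, hm⟩ := maEncode_mem.mp hs
      obtain ⟨e1, e2, e3⟩ := tpl_inj hm
      subst e1
      cases hq : q n
      · rw [hq] at e3; simp at e3
      · rfl
    · intro hq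
      refine ⟨n, maEncode_mem.mpr ⟨n, ?_⟩⟩
      rw [hq]
      rfl
  cases hq : q n
  · have hne : ¬ (∃ s, maEncode q (tpl n s 1) = true) := by
      intro h
      have ht := hiff.mp h
      rw [ht] at hq
      exact Bool.noConfusion hq
    simp [eVal, hne]
  · simp [eVal, hiff.mpr hq]

/-- An explicit non-(monotone approximation). -/
def badMA : Cantor := fun k => decide (k = tpl 0 0 0 ∨ k = tpl 0 1 0)

lemma badMA_not : ¬ TotalMonotoneApprox badMA := by
  rintro ⟨⟨-, h2, -⟩, -⟩
  have ha : badMA (tpl 0 0 0) = true := by simp [badMA]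
  have hb : badMA (tpl 0 1 0) = true := by simp [badMA]
  have := (h2 0 0 1 0 0 ha hb).1
  omega

/-! ### Represented spaces -/

/-- A represented space: a set `X` together with a partial surjection `δ : ⊆ 2^ω → X`. -/
structure RepSp : Type 1 where
  X : Type
  δ : Cantor →. X
  surj : ∀ x : X, ∃ p, x ∈ δ p

namespace RepSp

/-- The product representation of `X₀ × X₁`: `δ(⟨p₀,p₁⟩) = (δ₀(p₀), δ₁(p₁))`. -/
def prod (A B : RepSp) : RepSp where
  X := A.X × B.X
  δ := fun r => (A.δ (leftC r)).bind fun x => (B.δ (rightC r)).map fun y => (x, y)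
  surj := by
    rintro ⟨x, y⟩
    obtain ⟨p, hp⟩ := A.surj x
    obtain ⟨q, hq⟩ := B.surj y
    refine ⟨pairC p q, ?_⟩
    simp only [leftC_pairC, rightC_pairC, Part.mem_bind_iff]
    exact ⟨x, hp, Part.mem_map _ hq⟩

/-- The disjoint-union representation of `X₀ ⊔ X₁`: `δ(⟨i,p⟩) = ⟨i, δᵢ(p)⟩`. -/
def sum (A B : RepSp) : RepSp where
  X := A.X ⊕ B.X
  δ := fun r =>
    if leftC r = natSet 0 then (A.δ (rightC r)).map Sum.inl
    else if leftC r = natSet 1 then (B.δ (rightC r)).map Sum.inr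
    else Part.none
  surj := by
    rintro (x | y)
    · obtain ⟨p, hp⟩ := A.surj x
      refine ⟨inC 0 p, ?_⟩
      have e1 : leftC (inC 0 p) = natSet 0 := leftC_pairC _ _
      have e2 : rightC (inC 0 p) = p := rightC_pairC _ _
      simp only [e1, e2, if_pos rfl]
      exact Part.mem_map _ hp
    · obtain ⟨p, hp⟩ := B.surj y
      refine ⟨inC 1 p, ?_⟩
      have e1 : leftC (inC 1 p) = natSet 1 := leftC_pairC _ _
      have e2 : rightC (inC 1 p) = p := rightC_pairC _ _
      have hne : natSet 1 ≠ natSet 0 := by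
        intro h
        have := congrFun h 0
        simp [natSet] at this
      simp only [e1, e2, hne, if_neg, if_pos rfl, ite_false, ite_true]
      exact Part.mem_map _ hp

/-- The completion `Ŷ = Y ∪ {∞_Y}` (with `∞_Y` rendered as `none`), represented by
`δ_Ŷ(p) = δ_Y(e(p))` if `p` is a total monotone approximation with `e(p) ∈ dom(δ_Y)`, and
`δ_Ŷ(p) = ∞_Y` otherwise. -/
def hat (A : RepSp) : RepSp where
  X := Option A.X
  δ := fun p => Part.some (((evalMA p).bind A.δ).toOption)
  surj := by
    intro y
    match y with
    | none =>
        refine ⟨badMA, ?_⟩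
        rw [Part.mem_some_iff]
        have hd : ¬ ((evalMA badMA).bind A.δ).Dom := by
          rintro ⟨h1, -⟩
          exact badMA_not h1
        rw [eq_comm, Part.toOption_eq_none_iff]
        exact hd
    | some x =>
        obtain ⟨p, hp⟩ := A.surj x
        refine ⟨maEncode p, ?_⟩
        rw [Part.mem_some_iff, eq_comm, Part.toOption_eq_some_iff]
        refine Part.mem_bind_iff.mpr ?_
        refine ⟨p, ?_, hp⟩
        exact ⟨maEncode_total p, eVal_maEncode p⟩

end RepSp

/-! ### Partial multifunctions and the Weihrauch reducibilities -/

/-- A partial multifunction `f : ⊆ X ⇉ Y` between represented spaces: `f.f x` is the set of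
solutions of the instance `x`, and the domain of `f` is the set of `x` with `f.f x ≠ ∅`. -/
structure MFn : Type 1 where
  A : RepSp
  B : RepSp
  f : A.X → Set B.X

namespace MFn

/-- The coproduct `f ⊔ g`. -/
def sqcup (f g : MFn) : MFn where
  A := f.A.sum g.A
  B := f.B.sum g.B
  f := Sum.elim (fun x => Sum.inl '' f.f x) (fun y => Sum.inr '' g.f y)

/-- The meet `f ⊓ g`, with `(f ⊓ g)(⟨x,y⟩) = ({0} × f(x)) ∪ ({1} × g(y))` for
`x ∈ dom f`, `y ∈ dom g`. -/
def sqcap (f g : MFn) : MFn where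
  A := f.A.prod g.A
  B := f.B.sum g.B
  f := fun xy =>
    if (f.f xy.1).Nonempty ∧ (g.f xy.2).Nonempty then
      (Sum.inl '' f.f xy.1) ∪ (Sum.inr '' g.f xy.2)
    else ∅

/-- The join `f ⊞ g : ⊆ X₀ ⊔ X₁ ⇉ Ŷ₀ × Ŷ₁`, with `(f ⊞ g)(⟨0,x⟩) = f(x) × Ŷ₁` and
`(f ⊞ g)(⟨1,x⟩) = Ŷ₀ × g(x)`. -/
def boxplus (f g : MFn) : MFn where
  A := f.A.sum g.A
  B := (f.B.hat).prod (g.B.hat)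
  f := Sum.elim
    (fun x => (Option.some '' f.f x) ×ˢ (Set.univ : Set (Option g.B.X)))
    (fun y => (Set.univ : Set (Option f.B.X)) ×ˢ (Option.some '' g.f y))

end MFn

/-- `F ⊢ f`: the partial function `F : ⊆ 2^ω → 2^ω` is a realizer of `f`, i.e.
`δ_Y F(p) ∈ f δ_X(p)` for every `p ∈ dom(f δ_X)`. -/
def Realizes (F : Cantor →. Cantor) (f : MFn) : Prop :=
  ∀ p x, x ∈ f.A.δ p → (f.f x).Nonempty →
    ∃ q ∈ F p, ∃ y ∈ f.B.δ q, y ∈ f.f x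

/-- Composition of partial functions on Cantor space: `pcomp F G = F ∘ G`. -/
def pcomp (F G : Cantor →. Cantor) : Cantor →. Cantor := fun p => (G p).bind F

/-- Strong Weihrauch reducibility: `f ≤_sW g` iff there are Turing functionals `Φ, Ψ` with
`Ψ G Φ ⊢ f` for every `G ⊢ g`. -/
def sWLe (f g : MFn) : Prop :=
  ∃ Φ Ψ : TuringFunctional, ∀ G : Cantor →. Cantor, Realizes G g →
    Realizes (pcomp Ψ.eval (pcomp G Φ.eval)) f

/-- Strong Weihrauch equivalence. -/
def sWEq (f g : MFn) : Prop := sWLe f g ∧ sWLe g f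

/-- Weihrauch reducibility: `f ≤_W g` iff there are Turing functionals `Φ, Ψ` with
`Ψ⟨id, G Φ⟩ ⊢ f` for every `G ⊢ g`. -/
def wLe (f g : MFn) : Prop :=
  ∃ Φ Ψ : TuringFunctional, ∀ G : Cantor →. Cantor, Realizes G g →
    Realizes (fun p => (pcomp G Φ.eval p).bind fun q => Ψ.eval (pairC p q)) f

/-- Weihrauch equivalence. -/
def wEq (f g : MFn) : Prop := wLe f g ∧ wLe g f

/-- Cantor space as a represented space, with the identity representation. -/
def CantorSp : RepSp where
  X := Cantor
  δ := fun p => Part.some p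
  surj := fun p => ⟨p, Part.mem_some_iff.mpr rfl⟩

/-- A partial multifunction on Cantor space, viewed as a multifunction on represented
spaces via the identity representation. -/
def ofCantor (F : Cantor → Set Cantor) : MFn := ⟨CantorSp, CantorSp, F⟩

/-! ### Further definitions used in the statements -/

/-- `c` is an index for the Turing functional `Ψ`. -/
def codesTF (c : Nat.Partrec.Code) (Ψ : TuringFunctional) : Prop :=
  ∀ (σ : List Bool) (n : ℕ),
    c.eval (Nat.pair (Encodable.encode σ) n) = Part.some (Encodable.encode (Ψ.approx σ n))

/-- The multifunction `h` of Lemma 4.4: `h(⟨0,p⟩)` consists of all pairs `⟨a,q⟩` where `a`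
is a total monotone approximation with `e(a) ∈ F(p)`, and `h(⟨1,p⟩)` of all pairs `⟨q,a⟩`
where `a` is a total monotone approximation with `e(a) ∈ G(p)`. -/
def hJoin (F G : Cantor → Set Cantor) : Cantor → Set Cantor := fun r =>
  {z | leftC r = natSet 0 ∧
    ∃ a q, z = pairC a q ∧ TotalMonotoneApprox a ∧ eVal a ∈ F (rightC r)} ∪
  {z | leftC r = natSet 1 ∧
    ∃ q a, z = pairC q a ∧ TotalMonotoneApprox a ∧ eVal a ∈ G (rightC r)}

/-- A single-valued partial function on Cantor space, viewed as a partial multifunction on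
represented spaces (via the identity representation). -/
def pfnToM (F : Cantor →. Cantor) : MFn := ofCantor fun p => {q | q ∈ F p}

/-- The single-point partial function `{p} → {q}`. -/
def singleFn (p q : Cantor) : MFn := ofCantor fun r => if r = p then {q} else ∅

/-- `A` is Medvedev reducible to `B`. -/
def MedvedevLe (A B : Set Cantor) : Prop :=
  ∃ Φ : TuringFunctional, ∀ p ∈ B, ∃ q ∈ Φ.eval p, q ∈ A

/-- The all-zero sequence `0^ω`. -/
def zeroSeq : Cantor := fun _ => false

/-- `d_A : A → {0^ω}`. -/
def dFn (A : Set Cantor) : MFn := ofCantor fun p => if p ∈ A then {zeroSeq} else ∅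

/-- `A ⊔ B ⊆ 2^ω`: all `⟨i,p⟩` with `i < 2` and `p ∈ A` if `i = 0`, `p ∈ B` if `i = 1`. -/
def setSum (A B : Set Cantor) : Set Cantor :=
  {r | ∃ p ∈ A, r = inC 0 p} ∪ {r | ∃ p ∈ B, r = inC 1 p}

/-- `A × B ⊆ 2^ω`: all pairs `⟨p,q⟩` with `p ∈ A` and `q ∈ B`. -/
def setProd (A B : Set Cantor) : Set Cantor := {r | ∃ p ∈ A, ∃ q ∈ B, r = pairC p q}

/-- `p` is a name of an instance of `f`. -/
def domName (f : MFn) (p : Cantor) : Prop := ∃ x ∈ f.A.δ p, (f.f x).Nonempty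

/-- `q` is a name of a solution to the instance of `f` named by `p`. -/
def solName (f : MFn) (p q : Cantor) : Prop :=
  ∃ x ∈ f.A.δ p, ∃ y ∈ f.B.δ q, y ∈ f.f x

/-- Strong computable reducibility `f ≤_sc g`: every name `p` of an instance of `f`
computes a name `p'` of an instance of `g` such that every name of a solution to the
latter computes a name of a solution to the former. -/
def scLe (f g : MFn) : Prop :=
  ∀ p, domName f p → ∃ p', TuringLe p' p ∧ domName g p' ∧
    ∀ q, solName g p' q → ∃ z, TuringLe z q ∧ solName f p z

/-- Strong computable equivalence. -/
def scEq (f g : MFn) : Prop := scLe f g ∧ scLe g f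


/-! ### Auxiliary machinery for the proof -/

lemma pairC_leftC_rightC (r : Cantor) : pairC (leftC r) (rightC r) = r := by
  funext n
  by_cases h : n % 2 = 0
  · have h2 : 2 * (n / 2) = n := by omega
    simp [pairC, leftC, h, h2]
  · have h2 : 2 * (n / 2) + 1 = n := by omega
    simp [pairC, rightC, h, h2]

lemma natSet_zero_ne_one : natSet 0 ≠ natSet 1 := by
  intro h
  have := congrFun h 1
  simp [natSet] at this

lemma eval_eq_some (Φ : TuringFunctional) (p q : Cantor)
    (hdom : ∀ n, ∃ s b, Φ.approx (initSeg p s) n = some b)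
    (hval : ∀ n s b, Φ.approx (initSeg p s) n = some b → b = q n) :
    Φ.eval p = Part.some q := by
  rw [Part.eq_some_iff]
  exact ⟨hdom, funext fun n => hval n _ _ (hdom n).choose_spec.choose_spec⟩

/-- The identity Turing functional. -/
def idFn : TuringFunctional where
  approx := fun σ n => σ[n]?
  computable := Primrec.list_getElem?.to_comp
  mono := by
    rintro σ τ n b ⟨t, rfl⟩ h
    obtain ⟨hlt, -⟩ := List.getElem?_eq_some_iff.mp h
    show (σ ++ t)[n]? = some b
    rwa [List.getElem?_append_left hlt]

lemma initSeg_get (p : Cantor) {s n : ℕ} (h : n < s) :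
    (initSeg p s)[n]? = some (p n) := by
  show ((List.range s).map p)[n]? = some (p n)
  rw [List.getElem?_map, List.getElem?_range h]
  rfl

lemma idFn_eval (p : Cantor) : idFn.eval p = Part.some p := by
  refine eval_eq_some _ _ _ (fun n => ⟨n + 1, p n, initSeg_get p (Nat.lt_succ_self n)⟩) ?_
  intro n s b h
  have h' : (initSeg p s)[n]? = some b := h
  have hlt : n < s := by
    obtain ⟨hlt, -⟩ := List.getElem?_eq_some_iff.mp h'
    simpa [initSeg] using hlt
  rw [initSeg_get p hlt] at h'
  exact (Option.some.injEq _ _ ▸ h').symm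

/-- The constant Turing functional with computable output `c`. -/
def constFn (c : ℕ → Bool) (hc : Computable c) : TuringFunctional where
  approx := fun _ n => some (c n)
  computable := Computable.option_some.comp (hc.comp Computable.snd)
  mono := fun _ _ _ _ _ h => h

lemma constFn_eval (c : ℕ → Bool) (hc : Computable c) (p : Cantor) :
    (constFn c hc).eval p = Part.some c := by
  refine eval_eq_some _ _ _ (fun n => ⟨0, c n, rfl⟩) ?_
  intro n s b h
  exact (Option.some.injEq _ _ ▸ h).symm

lemma computable_zeroSeq : Computable zeroSeq := Computable.const false

lemma mem_pcomp {F G : Cantor →. Cantor} {p z : Cantor} :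
    z ∈ pcomp F G p ↔ ∃ y ∈ G p, z ∈ F y := by
  exact Part.mem_bind_iff

lemma realizes_dFn_zero {A : Set Cantor} {G : Cantor →. Cantor} (h : Realizes G (dFn A))
    {p : Cantor} (hp : p ∈ A) : zeroSeq ∈ G p := by
  obtain ⟨q, hq, y, hy, hmem⟩ := h p p (Part.mem_some_iff.mpr rfl)
    (by rw [show (dFn A).f p = if p ∈ A then {zeroSeq} else ∅ from rfl, if_pos hp]
        exact ⟨zeroSeq, rfl⟩)
  have hyq : y = q := Part.mem_some_iff.mp hy
  have : y = zeroSeq := by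
    rw [show (dFn A).f p = if p ∈ A then {zeroSeq} else ∅ from rfl, if_pos hp] at hmem
    exact hmem
  rwa [← hyq, this] at hq

lemma dFn_nonempty {A : Set Cantor} {p : Cantor}
    (h : ((dFn A).f p).Nonempty) : p ∈ A := by
  by_contra hp
  rw [show (dFn A).f p = if p ∈ A then {zeroSeq} else ∅ from rfl, if_neg hp] at h
  exact Set.not_nonempty_empty h

/-- The canonical second approximation sequence. -/
def aZ : Cantor := maEncode zeroSeq

def c2 : Cantor := pairC aZ aZ

lemma computable_c2 : Computable c2 := by
  have hg : Computable (fun n : ℕ =>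
      decide (n / 2 = tpl (n / 2).unpair.1 (n / 2).unpair.1 0)) := by
    have hdiv : Primrec (fun n : ℕ => n / 2) :=
      Primrec.nat_div.comp Primrec.id (Primrec.const 2)
    have hfst : Primrec (fun n : ℕ => (n / 2).unpair.1) :=
      Primrec.fst.comp (Primrec.unpair.comp hdiv)
    have htpl : Primrec (fun n : ℕ => tpl (n / 2).unpair.1 (n / 2).unpair.1 0) :=
      Primrec₂.natPair.comp hfst
        (Primrec₂.natPair.comp hfst (Primrec.const 0))
    exact (Primrec.eq.comp hdiv htpl).decide.to_comp
  refine hg.of_eq fun n => ?_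
  have key : ∀ k : ℕ, decide (k = tpl k.unpair.1 k.unpair.1 0) = aZ k := by
    intro k
    refine decide_eq_decide.mpr ?_
    constructor
    · intro h
      exact ⟨k.unpair.1, h⟩
    · rintro ⟨m, rfl⟩
      simp [tpl, Nat.unpair_pair, zeroSeq]
  have hc2 : c2 n = aZ (n / 2) := by
    by_cases h : n % 2 = 0 <;> simp [c2, pairC, h]
  rw [hc2, ← key]

def c3 : Cantor := inC 0 zeroSeq

lemma computable_c3 : Computable c3 := by
  have hg : Computable (fun n : ℕ => decide (n = 0)) :=
    (Primrec.eq.comp Primrec.id (Primrec.const 0)).decide.to_comp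
  refine hg.of_eq fun n => ?_
  rcases n with _ | m
  · simp [c3, inC, pairC, natSet]
  · by_cases h : (m + 1) % 2 = 0
    · have hpos : (m + 1) / 2 ≠ 0 := by omega
      simp [c3, inC, pairC, natSet, h, hpos]
    · simp [c3, inC, pairC, zeroSeq, h]

lemma hat_toOption_aZ : ((evalMA aZ).bind CantorSp.δ).toOption = some zeroSeq := by
  refine Part.toOption_eq_some_iff.mpr (Part.mem_bind_iff.mpr ?_)
  refine ⟨zeroSeq, ?_, Part.mem_some_iff.mpr rfl⟩
  have : eVal aZ = zeroSeq := eVal_maEncode zeroSeq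
  exact ⟨maEncode_total zeroSeq, this⟩

lemma prod_hat_delta (q : Cantor) :
    ((CantorSp.hat).prod (CantorSp.hat)).δ q = Part.some
      (((evalMA (leftC q)).bind CantorSp.δ).toOption,
       ((evalMA (rightC q)).bind CantorSp.δ).toOption) := by
  simp [RepSp.prod, RepSp.hat, Part.bind_some, Part.map_some]

lemma mem_chain {G : Cantor →. Cantor} {Ψ : TuringFunctional} {p q z : Cantor}
    (hq : q ∈ G p) (hz : z ∈ Ψ.eval q) :
    z ∈ pcomp Ψ.eval (pcomp G idFn.eval) p :=
  mem_pcomp.mpr ⟨q, mem_pcomp.mpr ⟨p, by rw [idFn_eval]; exact Part.mem_some_iff.mpr rfl, hq⟩, hz⟩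

lemma sum_delta_zero (X Y : RepSp) {r : Cantor} (h : leftC r = natSet 0) :
    (X.sum Y).δ r = (X.δ (rightC r)).map Sum.inl := by
  simp [RepSp.sum, h]

lemma sum_delta_one (X Y : RepSp) {r : Cantor} (h : leftC r = natSet 1) :
    (X.sum Y).δ r = (Y.δ (rightC r)).map Sum.inr := by
  simp [RepSp.sum, h, Ne.symm natSet_zero_ne_one]

lemma sum_delta_none (X Y : RepSp) {r : Cantor} (h0 : leftC r ≠ natSet 0)
    (h1 : leftC r ≠ natSet 1) : (X.sum Y).δ r = Part.none := by
  simp [RepSp.sum, h0, h1]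

lemma dFn_mem {A : Set Cantor} {p : Cantor} (hp : p ∈ A) : zeroSeq ∈ (dFn A).f p := by
  rw [show (dFn A).f p = if p ∈ A then {zeroSeq} else ∅ from rfl, if_pos hp]
  rfl

lemma boxplus_f_inl (f g : MFn) (x : f.A.X) :
    (f.boxplus g).f (Sum.inl x) = (Option.some '' f.f x) ×ˢ (Set.univ : Set (Option g.B.X)) := rfl

lemma boxplus_f_inr (f g : MFn) (x : g.A.X) :
    (f.boxplus g).f (Sum.inr x) = (Set.univ : Set (Option f.B.X)) ×ˢ (Option.some '' g.f x) := rfl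

lemma sqcap_nonempty {f g : MFn} {xy : f.A.X × g.A.X}
    (h : ((f.sqcap g).f xy).Nonempty) : (f.f xy.1).Nonempty ∧ (g.f xy.2).Nonempty := by
  by_contra hc
  have h' : (if (f.f xy.1).Nonempty ∧ (g.f xy.2).Nonempty then
      (Sum.inl '' f.f xy.1) ∪ (Sum.inr '' g.f xy.2) else ∅).Nonempty := h
  rw [if_neg hc] at h'
  exact Set.not_nonempty_empty h' 

lemma sqcap_mem_left {f g : MFn} {xy : f.A.X × g.A.X} {y : f.B.X}
    (hc : (f.f xy.1).Nonempty ∧ (g.f xy.2).Nonempty) (hy : y ∈ f.f xy.1) :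
    Sum.inl y ∈ (f.sqcap g).f xy := by
  show Sum.inl y ∈ (if (f.f xy.1).Nonempty ∧ (g.f xy.2).Nonempty then
      (Sum.inl '' f.f xy.1) ∪ (Sum.inr '' g.f xy.2) else ∅)
  rw [if_pos hc]
  exact Or.inl ⟨y, hy, rfl⟩

/-- Proposition 4.9: `A ↦ d_A` is a reverse lattice embedding of the
Medvedev lattice into the strong Weihrauch lattice. -/
theorem stmt16 : ∀ A B : Set Cantor,
    (sWLe (dFn B) (dFn A) ↔ MedvedevLe A B) ∧
    sWEq (dFn (setSum A B)) ((dFn A).boxplus (dFn B)) ∧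
    sWEq (dFn (setProd A B)) ((dFn A).sqcap (dFn B)) := by
  intro A B
  refine ⟨?_, ⟨?_, ?_⟩, ⟨?_, ?_⟩⟩
  · -- part 1
    constructor
    · rintro ⟨Φ, Ψ, h⟩
      refine ⟨Φ, fun p hp => ?_⟩
      set G : Cantor →. Cantor := fun q => ⟨q ∈ A, fun _ => zeroSeq⟩ with hGdef
      have hGr : Realizes G (dFn A) := by
        intro r x hx hne
        have hx' : r = x := (Part.mem_some_iff.mp hx).symm
        subst hx'
        have hrA : r ∈ A := dFn_nonempty hne
        refine ⟨zeroSeq, ⟨hrA, rfl⟩, zeroSeq, Part.mem_some_iff.mpr rfl, ?_⟩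
        rw [show (dFn A).f r = if r ∈ A then {zeroSeq} else ∅ from rfl, if_pos hrA]
        rfl
      obtain ⟨q, hq, -⟩ := h G hGr p p (Part.mem_some_iff.mpr rfl)
        (by rw [show (dFn B).f p = if p ∈ B then {zeroSeq} else ∅ from rfl, if_pos hp]
            exact ⟨zeroSeq, rfl⟩)
      rw [mem_pcomp] at hq
      obtain ⟨y, hy, -⟩ := hq
      rw [mem_pcomp] at hy
      obtain ⟨a, ha, hb⟩ := hy
      obtain ⟨hd, -⟩ := hb
      exact ⟨a, ha, hd⟩
    · rintro ⟨Φ, hΦ⟩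
      refine ⟨Φ, constFn zeroSeq computable_zeroSeq, fun G hG => ?_⟩
      intro p x hx hne
      have hx' : p = x := (Part.mem_some_iff.mp hx).symm
      subst hx'
      have hpB : p ∈ B := dFn_nonempty hne
      obtain ⟨a, ha, haA⟩ := hΦ p hpB
      have hz := realizes_dFn_zero hG haA
      refine ⟨zeroSeq, ?_, zeroSeq, Part.mem_some_iff.mpr rfl, ?_⟩
      · refine mem_pcomp.mpr ⟨zeroSeq, mem_pcomp.mpr ⟨a, ha, hz⟩, ?_⟩
        rw [constFn_eval]
        exact Part.mem_some_iff.mpr rfl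
      · rw [show (dFn B).f p = if p ∈ B then {zeroSeq} else ∅ from rfl, if_pos hpB]
        rfl
  · refine ⟨idFn, constFn zeroSeq computable_zeroSeq, fun G hG => ?_⟩
    intro p x hx hne
    have hx' : p = x := (Part.mem_some_iff.mp hx).symm
    subst hx'
    have hp : p ∈ setSum A B := dFn_nonempty hne
    have hGp : ∃ q, q ∈ G p := by
      rcases hp with ⟨p', hp', rfl⟩ | ⟨p', hp', rfl⟩
      · have hδ : (Sum.inl p' : Cantor ⊕ Cantor) ∈ (CantorSp.sum CantorSp).δ (inC 0 p') := by
          rw [sum_delta_zero _ _ (show leftC (inC 0 p') = natSet 0 from leftC_pairC _ _),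
            show rightC (inC 0 p') = p' from rightC_pairC _ _]
          exact (Part.mem_map_iff _).mpr ⟨p', Part.mem_some_iff.mpr rfl, rfl⟩
        have hne' : (((dFn A).boxplus (dFn B)).f (Sum.inl p')).Nonempty := by
          show ((Option.some '' (dFn A).f p') ×ˢ (Set.univ : Set (Option (dFn B).B.X))).Nonempty
          exact ⟨(some zeroSeq, none), Set.mem_prod.mpr ⟨⟨zeroSeq, dFn_mem hp', rfl⟩, trivial⟩⟩
        obtain ⟨q, hq, -⟩ := hG (inC 0 p') (Sum.inl p') hδ hne'
        exact ⟨q, hq⟩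
      · have hδ : (Sum.inr p' : Cantor ⊕ Cantor) ∈ (CantorSp.sum CantorSp).δ (inC 1 p') := by
          rw [sum_delta_one _ _ (show leftC (inC 1 p') = natSet 1 from leftC_pairC _ _),
            show rightC (inC 1 p') = p' from rightC_pairC _ _]
          exact (Part.mem_map_iff _).mpr ⟨p', Part.mem_some_iff.mpr rfl, rfl⟩
        have hne' : (((dFn A).boxplus (dFn B)).f (Sum.inr p')).Nonempty := by
          show ((Set.univ : Set (Option (dFn A).B.X)) ×ˢ (Option.some '' (dFn B).f p')).Nonempty
          exact ⟨(none, some zeroSeq), Set.mem_prod.mpr ⟨trivial, ⟨zeroSeq, dFn_mem hp', rfl⟩⟩⟩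
        obtain ⟨q, hq, -⟩ := hG (inC 1 p') (Sum.inr p') hδ hne'
        exact ⟨q, hq⟩
    obtain ⟨q, hq⟩ := hGp
    exact ⟨zeroSeq, mem_chain hq (by rw [constFn_eval]; exact Part.mem_some_iff.mpr rfl),
      zeroSeq, Part.mem_some_iff.mpr rfl, dFn_mem hp⟩
  · refine ⟨idFn, constFn c2 computable_c2, fun G hG => ?_⟩
    intro p x hx hne
    have hx2 : x ∈ (CantorSp.sum CantorSp).δ p := hx
    by_cases h0 : leftC p = natSet 0
    · rw [sum_delta_zero _ _ h0] at hx2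
      obtain ⟨a, ha, rfl⟩ := (Part.mem_map_iff _).mp hx2
      obtain rfl : a = rightC p := Part.mem_some_iff.mp ha
      have hne' : (((dFn A).boxplus (dFn B)).f (Sum.inl (rightC p))).Nonempty := hne
      change ((Option.some '' (dFn A).f (rightC p)) ×ˢ (Set.univ : Set (Option (dFn B).B.X))).Nonempty at hne'
      obtain ⟨y, hy⟩ := hne'
      obtain ⟨z, hz, -⟩ := (Set.mem_prod.mp hy).1
      have hA : rightC p ∈ A := dFn_nonempty ⟨z, hz⟩
      have hpS : p ∈ setSum A B := Or.inl ⟨rightC p, hA, by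
        rw [inC, ← h0, pairC_leftC_rightC]⟩
      have hz' := realizes_dFn_zero hG hpS
      refine ⟨c2, mem_chain hz' (by rw [constFn_eval]; exact Part.mem_some_iff.mpr rfl),
        (some zeroSeq, some zeroSeq), ?_, ?_⟩
      · have : ((some zeroSeq, some zeroSeq) : Option Cantor × Option Cantor) ∈
            ((CantorSp.hat).prod (CantorSp.hat)).δ c2 := by
          rw [prod_hat_delta, show leftC c2 = aZ from leftC_pairC _ _,
            show rightC c2 = aZ from rightC_pairC _ _, hat_toOption_aZ]
          exact Part.mem_some_iff.mpr rfl
        exact this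
      · show (some zeroSeq, some zeroSeq) ∈ (Option.some '' (dFn A).f (rightC p)) ×ˢ (Set.univ : Set (Option (dFn B).B.X))
        exact Set.mem_prod.mpr ⟨⟨zeroSeq, dFn_mem hA, rfl⟩, trivial⟩
    · by_cases h1 : leftC p = natSet 1
      · rw [sum_delta_one _ _ h1] at hx2
        obtain ⟨a, ha, rfl⟩ := (Part.mem_map_iff _).mp hx2
        obtain rfl : a = rightC p := Part.mem_some_iff.mp ha
        have hne' : (((dFn A).boxplus (dFn B)).f (Sum.inr (rightC p))).Nonempty := hne
        change ((Set.univ : Set (Option (dFn A).B.X)) ×ˢ (Option.some '' (dFn B).f (rightC p))).Nonempty at hne'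
        obtain ⟨y, hy⟩ := hne'
        obtain ⟨z, hz, -⟩ := (Set.mem_prod.mp hy).2
        have hB : rightC p ∈ B := dFn_nonempty ⟨z, hz⟩
        have hpS : p ∈ setSum A B := Or.inr ⟨rightC p, hB, by
          rw [inC, ← h1, pairC_leftC_rightC]⟩
        have hz' := realizes_dFn_zero hG hpS
        refine ⟨c2, mem_chain hz' (by rw [constFn_eval]; exact Part.mem_some_iff.mpr rfl),
          (some zeroSeq, some zeroSeq), ?_, ?_⟩
        · have : ((some zeroSeq, some zeroSeq) : Option Cantor × Option Cantor) ∈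
              ((CantorSp.hat).prod (CantorSp.hat)).δ c2 := by
            rw [prod_hat_delta, show leftC c2 = aZ from leftC_pairC _ _,
              show rightC c2 = aZ from rightC_pairC _ _, hat_toOption_aZ]
            exact Part.mem_some_iff.mpr rfl
          exact this
        · show (some zeroSeq, some zeroSeq) ∈ (Set.univ : Set (Option (dFn A).B.X)) ×ˢ (Option.some '' (dFn B).f (rightC p))
          exact Set.mem_prod.mpr ⟨trivial, ⟨zeroSeq, dFn_mem hB, rfl⟩⟩
      · rw [sum_delta_none _ _ h0 h1] at hx2
        exact absurd hx2 (Part.notMem_none x)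
  · refine ⟨idFn, constFn zeroSeq computable_zeroSeq, fun G hG => ?_⟩
    intro p x hx hne
    have hx' : p = x := (Part.mem_some_iff.mp hx).symm
    subst hx'
    have hp : p ∈ setProd A B := dFn_nonempty hne
    obtain ⟨p', hp', q', hq', rfl⟩ := hp
    have hδ : ((p', q') : Cantor × Cantor) ∈ (CantorSp.prod CantorSp).δ (pairC p' q') := by
      have e : (CantorSp.prod CantorSp).δ (pairC p' q') = Part.some ((p', q') : Cantor × Cantor) := by
        show ((Part.some (leftC (pairC p' q'))).bind
          fun a => (Part.some (rightC (pairC p' q'))).map fun b => (a, b)) = _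
        rw [leftC_pairC, rightC_pairC, Part.bind_some, Part.map_some]
      rw [e]
      exact Part.mem_some_iff.mpr rfl
    have hcond : ((dFn A).f p').Nonempty ∧ ((dFn B).f q').Nonempty :=
      ⟨⟨zeroSeq, dFn_mem hp'⟩, ⟨zeroSeq, dFn_mem hq'⟩⟩
    have hne' : (((dFn A).sqcap (dFn B)).f (p', q')).Nonempty :=
      ⟨Sum.inl zeroSeq, sqcap_mem_left hcond (dFn_mem hp')⟩
    obtain ⟨q, hq, -⟩ := hG (pairC p' q') (p', q') hδ hne'
    exact ⟨zeroSeq, mem_chain hq (by rw [constFn_eval]; exact Part.mem_some_iff.mpr rfl),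
      zeroSeq, Part.mem_some_iff.mpr rfl, dFn_mem ⟨p', hp', q', hq', rfl⟩⟩
  · refine ⟨idFn, constFn c3 computable_c3, fun G hG => ?_⟩
    intro p x hx hne
    have hx2 : x ∈ ((Part.some (leftC p)).bind fun a =>
        (Part.some (rightC p)).map fun b => (a, b)) := hx
    rw [Part.bind_some, Part.map_some] at hx2
    obtain rfl : x = (leftC p, rightC p) := Part.mem_some_iff.mp hx2
    have hcond := sqcap_nonempty (f := dFn A) (g := dFn B) hne
    have hA : leftC p ∈ A := dFn_nonempty hcond.1
    have hB : rightC p ∈ B := dFn_nonempty hcond.2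
    have hpS : p ∈ setProd A B := ⟨leftC p, hA, rightC p, hB, (pairC_leftC_rightC p).symm⟩
    have hz := realizes_dFn_zero hG hpS
    refine ⟨c3, mem_chain hz (by rw [constFn_eval]; exact Part.mem_some_iff.mpr rfl),
      Sum.inl zeroSeq, ?_, ?_⟩
    · have : (Sum.inl zeroSeq : Cantor ⊕ Cantor) ∈ (CantorSp.sum CantorSp).δ c3 := by
        rw [sum_delta_zero _ _ (show leftC c3 = natSet 0 from leftC_pairC _ _),
          show rightC c3 = zeroSeq from rightC_pairC _ _]
        exact (Part.mem_map_iff _).mpr ⟨zeroSeq, Part.mem_some_iff.mpr rfl, rfl⟩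
      exact this
    · exact sqcap_mem_left hcond (dFn_mem hA)



end

end StrongWeihrauch
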